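/- Let X ⊂ P^n (n ≥ 2) be a hypersurface over F_q of degree d that contains at least one smooth F_q-rational point and satisfies #X(F_q) ≥ #P^n(F_q) − 1. Then d ≥ q+1. -/

import Mathlib

open MvPolynomial

section
variable {F : Type*} [CommSemiring F] {m : ℕ}

lemma coeff_zero_aux (b c : Fin m → F) (f : MvPolynomial (Fin m) F) :
    (MvPolynomial.aeval (fun i => Polynomial.C (b i) + Polynomial.C (c i) * Polynomial.X) f).coeff 0
      = eval b f := by
  induction f using MvPolynomial.induction_on with
  | C a => simp
  | add p r hp hr => simp [hp, hr]
  | mul_X p j hp => simp [Polynomial.mul_coeff_zero, hp]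

lemma coeff_one_aux (b c : Fin m → F) (f : MvPolynomial (Fin m) F) :
    (MvPolynomial.aeval (fun i => Polynomial.C (b i) + Polynomial.C (c i) * Polynomial.X) f).coeff 1
      = ∑ i, c i * eval b (pderiv i f) := by
  induction f using MvPolynomial.induction_on with
  | C a => simp
  | add p r hp hr =>
      simp only [map_add, Polynomial.coeff_add, hp, hr, eval_add, mul_add,
        Finset.sum_add_distrib]
  | mul_X p i hp =>
      rw [map_mul, aeval_X]
      rw [show (MvPolynomial.aeval
          (fun i => Polynomial.C (b i) + Polynomial.C (c i) * Polynomial.X) p) *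
          (Polynomial.C (b i) + Polynomial.C (c i) * Polynomial.X)
          = (MvPolynomial.aeval
          (fun i => Polynomial.C (b i) + Polynomial.C (c i) * Polynomial.X) p) * Polynomial.C (b i)
          + ((MvPolynomial.aeval
          (fun i => Polynomial.C (b i) + Polynomial.C (c i) * Polynomial.X) p) * Polynomial.C (c i))
            * Polynomial.X by ring]
      rw [Polynomial.coeff_add, Polynomial.coeff_mul_C,
        show (1 : ℕ) = 0 + 1 from rfl, Polynomial.coeff_mul_X, Polynomial.coeff_mul_C,
        coeff_zero_aux b c p, hp]
      classical
      simp only [pderiv_mul, pderiv_X, eval_add, eval_mul, eval_X, mul_add]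
      rw [Finset.sum_add_distrib]
      congr 1
      · rw [Finset.sum_mul]
        apply Finset.sum_congr rfl
        intro j _
        ring
      · rw [Finset.sum_eq_single i]
        · simp [mul_comm]
        · intro j _ hj
          simp [Pi.single_apply, hj]
        · simp
end

set_option maxHeartbeats 1000000 in
/-- Let X = {F=0} ⊂ P^n (n ≥ 2) be a hypersurface of degree d over F_q containing
a smooth F_q-point and satisfying #X(F_q) ≥ #P^n(F_q) − 1. Then d ≥ q+1. -/
theorem stmt13 {F : Type*} [Field F] [Fintype F] (q d n : ℕ)
    (hq : Fintype.card F = q) (hn : 2 ≤ n)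
    (f : MvPolynomial (Fin (n + 1)) F) (hf0 : f ≠ 0) (hhom : f.IsHomogeneous d)
    (hsm : ∃ b : Fin (n + 1) → F, b ≠ 0 ∧ eval b f = 0 ∧
      ∃ i, eval b (pderiv i f) ≠ 0)
    (hcard : Nat.card (Projectivization F (Fin (n + 1) → F)) - 1 ≤
      Nat.card {P : Projectivization F (Fin (n + 1) → F) // eval P.rep f = 0}) :
    q + 1 ≤ d := by
  classical
  by_contra hcon
  push_neg at hcon
  replace hcon : d ≤ q := by omega
  obtain ⟨b, hb0, hfb, i0, hi0⟩ := hsm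
  -- d ≠ 0
  have hd0 : d ≠ 0 := by
    rintro rfl
    have hfC : f = C (coeff 0 f) := by
      ext mo
      rcases eq_or_ne mo 0 with rfl | hm
      · simp
      · rw [hhom.coeff_eq_zero (by simpa [Finsupp.degree_eq_zero_iff] using hm)]
        simp [coeff_C, Ne.symm hm]
    rw [hfC] at hi0
    simp [pderiv_C] at hi0
  -- homogeneous scaling
  have hsmul : ∀ (u : F) (v : Fin (n + 1) → F), eval (u • v) f = u ^ d * eval v f := by
    intro u v
    rw [eval_eq', eval_eq', Finset.mul_sum]
    apply Finset.sum_congr rfl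
    intro mo hm
    have hdeg : ∑ i, mo i = d := by
      have h2 := hhom (mem_support_iff.mp hm)
      rw [show (1 : Fin (n + 1) → ℕ) = fun _ => 1 from rfl, ← Finsupp.degree_eq_weight_one] at h2
      rw [← h2, Finsupp.degree]
      exact (Finset.sum_subset (Finset.subset_univ _)
        (fun i _ hi => Finsupp.notMem_support_iff.mp hi)).symm
    simp only [Pi.smul_apply, smul_eq_mul, mul_pow, Finset.prod_mul_distrib,
      Finset.prod_pow_eq_pow_sum, hdeg]
    ring
  have heval0 : eval (0 : Fin (n + 1) → F) f = 0 := by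
    rw [eval_zero]
    exact hhom.coeff_eq_zero (by simpa using Ne.symm hd0)
  haveI : Finite (Projectivization F (Fin (n + 1) → F)) :=
    (Quotient.finite _ : Finite (Quotient (projectivizationSetoid F (Fin (n + 1) → F))))
  letI : Fintype (Projectivization F (Fin (n + 1) → F)) := Fintype.ofFinite _
  -- at most one projective nonzero of f
  have hsub : ∀ P Q : Projectivization F (Fin (n + 1) → F),
      eval P.rep f ≠ 0 → eval Q.rep f ≠ 0 → P = Q := by
    intro P Q hP hQ
    rw [Nat.card_eq_fintype_card, Nat.card_eq_fintype_card] at hcard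
    have h1 : Fintype.card {P : Projectivization F (Fin (n + 1) → F) // ¬ (eval P.rep f = 0)}
        = Fintype.card (Projectivization F (Fin (n + 1) → F))
          - Fintype.card {P : Projectivization F (Fin (n + 1) → F) // eval P.rep f = 0} :=
      Fintype.card_subtype_compl _
    have h2 : Fintype.card {P : Projectivization F (Fin (n + 1) → F) // eval P.rep f = 0}
        ≤ Fintype.card (Projectivization F (Fin (n + 1) → F)) := Fintype.card_subtype_le _
    have h3 : Fintype.card {P : Projectivization F (Fin (n + 1) → F) // ¬ (eval P.rep f = 0)} ≤ 1 := by
      omega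
    have := Fintype.card_le_one_iff.mp h3 ⟨P, hP⟩ ⟨Q, hQ⟩
    exact congrArg Subtype.val this
  -- the exceptional direction
  obtain ⟨v0, h1, hbv0⟩ : ∃ v0 : Fin (n + 1) → F,
      (∀ v : Fin (n + 1) → F, v ∉ Submodule.span F {v0} → eval v f = 0) ∧
        b ∉ Submodule.span F {v0} := by
    by_cases hS : ∃ P : Projectivization F (Fin (n + 1) → F), eval P.rep f ≠ 0
    · obtain ⟨P0, hP0⟩ := hS
      refine ⟨P0.rep, ?_, ?_⟩
      · intro v hv
        rcases eq_or_ne v 0 with rfl | hv0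
        · exact heval0
        · by_contra hne
          obtain ⟨a, ha⟩ := Projectivization.exists_smul_eq_mk_rep F v hv0
          have hrep : eval (Projectivization.mk F v hv0).rep f ≠ 0 := by
            rw [← ha, Units.smul_def, hsmul]
            exact mul_ne_zero (pow_ne_zero _ a.ne_zero) hne
          have hPQ := hsub _ _ hrep hP0
          apply hv
          have hP0rep : P0.rep = a • v := by rw [← hPQ, ← ha]
          refine Submodule.mem_span_singleton.mpr ⟨((a⁻¹ : Fˣ) : F), ?_⟩
          rw [hP0rep]
          rw [show (a : Fˣ) • v = (a : F) • v from rfl, smul_smul]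
          simp
      · intro hmem
        obtain ⟨u, rfl⟩ := Submodule.mem_span_singleton.mp hmem
        rw [hsmul] at hfb
        rcases mul_eq_zero.mp hfb with h | h
        · exact hb0 (by rw [pow_eq_zero_iff hd0] at h; simp [h])
        · exact hP0 h
    · push_neg at hS
      refine ⟨0, ?_, ?_⟩
      · intro v hv
        have hv0 : v ≠ 0 := by
          intro h
          exact hv (by simp [h])
        have hz := hS (Projectivization.mk F v hv0)
        obtain ⟨a, ha⟩ := Projectivization.exists_smul_eq_mk_rep F v hv0
        rw [← ha, Units.smul_def, hsmul] at hz
        rcases mul_eq_zero.mp hz with h | h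
        · exact absurd h (pow_ne_zero _ a.ne_zero)
        · exact h
      · rw [Submodule.span_zero_singleton]
        simpa using hb0
  -- W = span {b, v0} is proper
  set W := Submodule.span F ({b, v0} : Set (Fin (n + 1) → F)) with hWdef
  have hWtop : W ≠ ⊤ := by
    intro htop
    have hle : Module.finrank F W ≤ 2 := by
      refine (finrank_span_le_card ({b, v0} : Set (Fin (n + 1) → F))).trans ?_
      rw [Set.toFinset_insert, Set.toFinset_singleton]
      exact (Finset.card_insert_le _ _).trans (by simp)
    rw [htop, finrank_top, Module.finrank_pi, Fintype.card_fin] at hle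
    omega
  -- the key vanishing of the differential outside W
  have key : ∀ c : Fin (n + 1) → F, c ∉ W → ∑ i, c i * eval b (pderiv i f) = 0 := by
    intro c hc
    set g : Fin (n + 1) → MvPolynomial (Fin 2) F :=
      fun i => C (b i) * X 0 + C (c i) * X 1 with hgdef
    have hGhom : (MvPolynomial.aeval g f).IsHomogeneous d := by
      have h := hhom.eval₂ (algebraMap F (MvPolynomial (Fin 2) F)) g
        (fun r => by rw [MvPolynomial.algebraMap_eq]; exact isHomogeneous_C _ _)
        (fun i => ((isHomogeneous_X _ (0 : Fin 2)).C_mul (b i)).add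
          ((isHomogeneous_X _ (1 : Fin 2)).C_mul (c i)))
      rw [one_mul] at h
      rwa [aeval_def]
    have hGzero : ∀ r : Fin 2 → F, eval r (MvPolynomial.aeval g f) = 0 := by
      intro r
      have hcomp : (MvPolynomial.aeval (R := F) r) (MvPolynomial.aeval g f)
          = MvPolynomial.aeval (fun i => (MvPolynomial.aeval (R := F) r) (g i)) f :=
        comp_aeval_apply (f := g) _ f
      have hev : eval r (MvPolynomial.aeval g f)
          = eval (fun i => b i * r 0 + c i * r 1) f := by
        rw [show eval r (MvPolynomial.aeval g f) = MvPolynomial.aeval (R := F) r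
            (MvPolynomial.aeval g f) from rfl, hcomp]
        rw [show (MvPolynomial.aeval (R := F) (fun i => (MvPolynomial.aeval (R := F) r) (g i)) f)
            = eval (fun i => (MvPolynomial.aeval (R := F) r) (g i)) f from rfl]
        have harg : (fun i => (MvPolynomial.aeval (R := F) r) (g i))
            = fun i => b i * r 0 + c i * r 1 := by
          funext i
          simp [hgdef]
        rw [harg]
      rw [hev]
      set v : Fin (n + 1) → F := fun i => b i * r 0 + c i * r 1 with hvdef
      by_cases hvs : v ∈ Submodule.span F {v0}
      · have hbW : b ∈ W := Submodule.subset_span (Set.mem_insert _ _)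
        have hvW : v ∈ W :=
          Submodule.span_mono (Set.subset_insert _ _) hvs
        have hr1 : r 1 = 0 := by
          by_contra hr1
          apply hc
          have hsc : (r 1) • c = v - (r 0) • b := by
            funext i
            simp [hvdef]
            ring
          have h2 : (r 1) • c ∈ W := hsc ▸ W.sub_mem hvW (W.smul_mem _ hbW)
          have h3 := W.smul_mem (r 1)⁻¹ h2
          rwa [smul_smul, inv_mul_cancel₀ hr1, one_smul] at h3
        have hr0 : r 0 = 0 := by
          by_contra hr0
          apply hbv0
          have hvb : v = (r 0) • b := by
            funext i
            simp [hvdef, hr1]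
            ring
          have h2 : (r 0) • b ∈ Submodule.span F {v0} := hvb ▸ hvs
          have h3 := Submodule.smul_mem _ (r 0)⁻¹ h2
          rwa [smul_smul, inv_mul_cancel₀ hr0, one_smul] at h3
        have hv0' : v = 0 := by
          funext i
          simp [hvdef, hr0, hr1]
        rw [hv0']
        exact heval0
      · exact h1 v hvs
    have hG0 : MvPolynomial.aeval g f = 0 :=
      hGhom.eq_zero_of_forall_eval_eq_zero_of_le_card hGzero
        (by rw [Cardinal.mk_fintype, hq]; exact_mod_cast hcon)
    have hPhi : (MvPolynomial.aeval
        (fun i => Polynomial.C (b i) + Polynomial.C (c i) * Polynomial.X) f) = 0 := by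
      have h := comp_aeval_apply
        (f := g) (MvPolynomial.aeval (R := F) (![1, Polynomial.X] : Fin 2 → Polynomial F)) f
      rw [hG0, map_zero] at h
      have h2 : (fun i => (MvPolynomial.aeval (R := F) (![1, Polynomial.X] : Fin 2 → Polynomial F))
          (g i)) = fun i => Polynomial.C (b i) + Polynomial.C (c i) * Polynomial.X := by
        funext i
        simp [hgdef, Polynomial.algebraMap_eq]
      rw [h2] at h
      exact h.symm
    have := coeff_one_aux b c f
    rw [hPhi] at this
    simpa using this.symm
  -- the differential vanishes everywhere, contradiction
  obtain ⟨x, hx⟩ : ∃ x : Fin (n + 1) → F, x ∉ W := by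
    by_contra hall
    push_neg at hall
    exact hWtop (Submodule.eq_top_iff'.mpr hall)
  have hall : ∀ w : Fin (n + 1) → F, ∑ i, w i * eval b (pderiv i f) = 0 := by
    intro w
    by_cases hw : w ∈ W
    · have hwx : w + x ∉ W := fun h => hx (by simpa using W.sub_mem h hw)
      have e1 := key (w + x) hwx
      have e2 := key x hx
      have e3 : ∑ i, (w + x) i * eval b (pderiv i f)
          = ∑ i, w i * eval b (pderiv i f) + ∑ i, x i * eval b (pderiv i f) := by
        rw [← Finset.sum_add_distrib]
        apply Finset.sum_congr rfl
        intro i _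
        simp [add_mul]
      rw [e3, e2, add_zero] at e1
      exact e1
    · exact key w hw
  have hfin := hall (Pi.single i0 1)
  rw [Finset.sum_eq_single i0] at hfin
  · simp at hfin
    exact hi0 hfin
  · intro j _ hj
    simp [Pi.single_apply, hj]
  · simp
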